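/- Let M = (E, G) ∈ ℰ₃ with χ(M) ≥ 3. Then for every hyperplane H of G, the matroid M is a semidoubling of M|H. -/

import Mathlib

/-- A simple binary matroid `M = (E, G)`: a dimension `n` together with a ground set `E`
of nonzero vectors of `𝔽₂ⁿ` (the points of `G = 𝔽₂ⁿ \ {0}`). -/
structure BinMatroid where
  dim : ℕ
  E : Set (Fin dim → ZMod 2)
  zero_not_mem : 0 ∉ E

namespace BinMatroid

/-- `M.HasIR N` : `M` contains `N` as an induced restriction, i.e. there is an injective
linear map `φ` with `φ(E(N)) = E(M) ∩ (φ(G') \ {0})`. -/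
def HasIR (M N : BinMatroid) : Prop :=
  ∃ φ : (Fin N.dim → ZMod 2) →ₗ[ZMod 2] (Fin M.dim → ZMod 2),
    Function.Injective φ ∧ φ '' N.E = M.E ∩ (Set.range φ \ {0})

/-- Isomorphism of binary matroids: a bijective induced embedding. -/
def Iso (M N : BinMatroid) : Prop :=
  ∃ φ : (Fin N.dim → ZMod 2) →ₗ[ZMod 2] (Fin M.dim → ZMod 2),
    Function.Bijective φ ∧ φ '' N.E = M.E ∩ (Set.range φ \ {0})

/-- The critical number of the induced restriction of the ground set `E` to the flat of
the subspace `F`: the least `k` such that some flat of `F` of dimension `dim F - k`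
is disjoint from `E`. -/
noncomputable def critNumRes {n : ℕ} (E : Set (Fin n → ZMod 2))
    (F : Submodule (ZMod 2) (Fin n → ZMod 2)) : ℕ :=
  sInf {k : ℕ | ∃ W : Submodule (ZMod 2) (Fin n → ZMod 2), W ≤ F ∧
    Module.finrank (ZMod 2) W = Module.finrank (ZMod 2) F - k ∧
    Disjoint ((W : Set (Fin n → ZMod 2)) \ {0}) E}

/-- The critical number `χ(M)`: the least `k ≥ 0` such that some flat of dimension
`n - k` is disjoint from `E`. -/
noncomputable def critNum (M : BinMatroid) : ℕ :=
  sInf {k : ℕ | ∃ W : Submodule (ZMod 2) (Fin M.dim → ZMod 2),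
    Module.finrank (ZMod 2) W = M.dim - k ∧
    Disjoint ((W : Set (Fin M.dim → ZMod 2)) \ {0}) M.E}

/-- `M ∈ ℰ_k` : every induced restriction of `M` to a flat of dimension at least `k`
has even size. -/
def MemE (k : ℕ) (M : BinMatroid) : Prop :=
  ∀ W : Submodule (ZMod 2) (Fin M.dim → ZMod 2),
    k ≤ Module.finrank (ZMod 2) W →
    Even (M.E ∩ ((W : Set (Fin M.dim → ZMod 2)) \ {0})).ncard

/-- `M` is full-rank: `E` spans `𝔽₂ⁿ`. -/
def FullRank (M : BinMatroid) : Prop :=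
  Submodule.span (ZMod 2) M.E = ⊤

/-- `M` is (isomorphic to) the doubling of `M₀`: `M₀` is identified, via an injective
linear map `φ`, with the restriction of `M` to a hyperplane `H = range φ`, there is
`w ∈ G − (E ∪ H)`, and `E = (E ∩ H) ∪ (w + (E ∩ H))`. -/
def IsDoublingOf (M M₀ : BinMatroid) : Prop :=
  M.dim = M₀.dim + 1 ∧
  ∃ φ : (Fin M₀.dim → ZMod 2) →ₗ[ZMod 2] (Fin M.dim → ZMod 2),
    Function.Injective φ ∧
    ∃ w : Fin M.dim → ZMod 2, w ≠ 0 ∧ w ∉ Set.range φ ∧ w ∉ M.E ∧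
      M.E = φ '' M₀.E ∪ (fun x => w + x) '' (φ '' M₀.E)

/-- `M` arises from `M₀` by a (possibly empty) sequence of doublings. -/
def ArisesByDoublings (M M₀ : BinMatroid) : Prop :=
  ∃ M' : BinMatroid,
    Relation.ReflTransGen (fun A B => IsDoublingOf B A) M₀ M' ∧ M.Iso M'

/-- `M` is (a copy of) `AG°(t−1, 2)`, the matroid `((G − H) ∪ {x}, G)` with `H` a
hyperplane of `G` and `x ∈ H`, where `t = M.dim`. -/
def IsAGo (M : BinMatroid) : Prop :=
  ∃ H : Submodule (ZMod 2) (Fin M.dim → ZMod 2),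
    Module.finrank (ZMod 2) H + 1 = M.dim ∧
    ∃ x ∈ (H : Set (Fin M.dim → ZMod 2)) \ {0},
      M.E = ({v | v ≠ 0} \ (H : Set (Fin M.dim → ZMod 2))) ∪ {x}

/-- `M` is a Bose–Burton geometry of order `k`: `E = G − F` for a flat `F` of
dimension `n − k`. -/
def IsBoseBurton (M : BinMatroid) (k : ℕ) : Prop :=
  k ≤ M.dim ∧ ∃ W : Submodule (ZMod 2) (Fin M.dim → ZMod 2),
    Module.finrank (ZMod 2) W = M.dim - k ∧
    M.E = {v | v ≠ 0} \ (W : Set (Fin M.dim → ZMod 2))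

/-- The ground set `E` (of a matroid of the ambient dimension `n`) is the semidoubling
of its restriction to the hyperplane `H₁` with respect to the hyperplane `H₀` of `H₁`:
there is `w ∈ G − (E ∪ H₁)` with `|{x, x+w} ∩ E| ∈ {0, 2}` for every `x ∈ H₀` and
`|{x, x+w} ∩ E| = 1` for every `x ∈ H₁ − H₀`. -/
def IsSemidoublingWrt {n : ℕ} (E : Set (Fin n → ZMod 2))
    (H₁ H₀ : Submodule (ZMod 2) (Fin n → ZMod 2)) : Prop :=
  H₀ ≤ H₁ ∧ Module.finrank (ZMod 2) H₀ + 1 = Module.finrank (ZMod 2) H₁ ∧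
  ∃ w : Fin n → ZMod 2, w ≠ 0 ∧ w ∉ H₁ ∧ w ∉ E ∧
    (∀ x ∈ (H₀ : Set (Fin n → ZMod 2)) \ {0},
      (({x, x + w} : Set (Fin n → ZMod 2)) ∩ E).ncard = 0 ∨
      (({x, x + w} : Set (Fin n → ZMod 2)) ∩ E).ncard = 2) ∧
    (∀ x ∈ (H₁ : Set (Fin n → ZMod 2)) \ (H₀ : Set (Fin n → ZMod 2)),
      (({x, x + w} : Set (Fin n → ZMod 2)) ∩ E).ncard = 1)

/-- The ground set `E` is a semidoubling of its restriction to the hyperplane `H₁`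
(with respect to some hyperplane `H₀` of `H₁`). -/
def IsSemidoublingOfRes {n : ℕ} (E : Set (Fin n → ZMod 2))
    (H₁ : Submodule (ZMod 2) (Fin n → ZMod 2)) : Prop :=
  ∃ H₀ : Submodule (ZMod 2) (Fin n → ZMod 2), IsSemidoublingWrt E H₁ H₀

/-- `M` is (isomorphic to) a semidoubling of `M₀`: `M₀` is identified, via an injective
linear map `φ`, with the restriction of `M` to the hyperplane `range φ`, and `M` is a
semidoubling of that restriction. -/
def IsSemidoublingOf (M M₀ : BinMatroid) : Prop :=
  M.dim = M₀.dim + 1 ∧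
  ∃ φ : (Fin M₀.dim → ZMod 2) →ₗ[ZMod 2] (Fin M.dim → ZMod 2),
    Function.Injective φ ∧
    φ '' M₀.E = M.E ∩ (Set.range φ \ {0}) ∧
    IsSemidoublingOfRes M.E (LinearMap.range φ)

/-- `M` arises from `M₀` by a (possibly empty) sequence of semidoublings. -/
def ArisesBySemidoublings (M M₀ : BinMatroid) : Prop :=
  ∃ M' : BinMatroid,
    Relation.ReflTransGen (fun A B => IsSemidoublingOf B A) M₀ M' ∧ M.Iso M'

end BinMatroid

/-- A triangle of `G`: a set `{x, y, z}` of three distinct nonzero vectors with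
`x + y + z = 0`. -/
def IsTriangle {n : ℕ} (T : Set (Fin n → ZMod 2)) : Prop :=
  ∃ x y z : Fin n → ZMod 2, x ≠ 0 ∧ y ≠ 0 ∧ z ≠ 0 ∧
    x ≠ y ∧ x ≠ z ∧ y ≠ z ∧ x + y + z = 0 ∧ T = {x, y, z}

/-- `I₃`, the claw: the 3-dimensional matroid whose ground set is the three standard
basis vectors of `𝔽₂³`. -/
def I3 : BinMatroid where
  dim := 3
  E := Set.range fun i : Fin 3 => (Pi.single i 1 : Fin 3 → ZMod 2)
  zero_not_mem := by
    rintro ⟨i, hi⟩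
    have := congrFun hi i
    simp [Pi.single_eq_same] at this

/-- `F₇`, the Fano plane: the 3-dimensional matroid whose ground set is all of
`𝔽₂³ \ {0}`. -/
def F7 : BinMatroid where
  dim := 3
  E := {v | v ≠ 0}
  zero_not_mem := by simp

/-- `K₅`: the 4-dimensional matroid whose ground set is the set of vectors of Hamming
weight 1 or 2 in `𝔽₂⁴`. -/
def K5 : BinMatroid where
  dim := 4
  E := {v | hammingNorm v = 1 ∨ hammingNorm v = 2}
  zero_not_mem := by
    intro h
    simp only [Set.mem_setOf_eq, hammingNorm_zero] at h
    omega


section SDAux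
open Module Submodule

variable {n : ℕ}

private lemma zmod2cases (c : ZMod 2) : c = 0 ∨ c = 1 := by revert c; decide

private lemma addself (v : Fin n → ZMod 2) : v + v = 0 := by
  funext i; exact CharTwo.add_self_eq_zero (v i)

private lemma cancel2 (u v : Fin n → ZMod 2) : u + (u + v) = v := by
  rw [← add_assoc, addself, zero_add]

private lemma cancel1 (u v : Fin n → ZMod 2) : (u + v) + v = u := by
  rw [add_assoc, addself, add_zero]

open Classical in
private noncomputable def indE (E : Set (Fin n → ZMod 2)) (z : Fin n → ZMod 2) : ℕ :=
  if z ∈ E then 1 else 0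

private lemma indE_of_mem {E : Set (Fin n → ZMod 2)} {z : Fin n → ZMod 2} (h : z ∈ E) :
    indE E z = 1 := if_pos h

private lemma indE_of_not_mem {E : Set (Fin n → ZMod 2)} {z : Fin n → ZMod 2} (h : z ∉ E) :
    indE E z = 0 := if_neg h

private lemma even_indE_add {E : Set (Fin n → ZMod 2)} {a b : Fin n → ZMod 2} :
    Even (indE E a + indE E b) ↔ (a ∈ E ↔ b ∈ E) := by
  by_cases ha : a ∈ E <;> by_cases hb : b ∈ E <;>
    simp [indE_of_mem, indE_of_not_mem, ha, hb]

private lemma ncard_inter_list (E : Set (Fin n → ZMod 2)) :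
    ∀ l : List (Fin n → ZMod 2), l.Nodup →
      (E ∩ {z | z ∈ l}).ncard = (l.map (indE E)).sum := by
  intro l
  induction l with
  | nil => intro _; simp
  | cons a t ih =>
    intro hnd
    rw [List.nodup_cons] at hnd
    have hins : {z : Fin n → ZMod 2 | z ∈ a :: t} = insert a {z | z ∈ t} := by
      ext z; simp [List.mem_cons]
    by_cases ha : a ∈ E
    · have h2 : E ∩ {z : Fin n → ZMod 2 | z ∈ a :: t} = insert a (E ∩ {z | z ∈ t}) := by
        rw [hins, Set.inter_insert_of_mem ha]
      have hnm : a ∉ E ∩ {z : Fin n → ZMod 2 | z ∈ t} := fun h => hnd.1 h.2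
      rw [h2, Set.ncard_insert_of_notMem hnm, List.map_cons, List.sum_cons,
        ih hnd.2, indE_of_mem ha]
      omega
    · have h2 : E ∩ {z : Fin n → ZMod 2 | z ∈ a :: t} = E ∩ {z | z ∈ t} := by
        ext z
        simp only [hins, Set.mem_inter_iff, Set.mem_insert_iff, Set.mem_setOf_eq]
        constructor
        · rintro ⟨hz, rfl | hz2⟩
          · exact absurd hz ha
          · exact ⟨hz, hz2⟩
        · rintro ⟨hz, hz2⟩; exact ⟨hz, Or.inr hz2⟩
      rw [h2, List.map_cons, List.sum_cons, ih hnd.2, indE_of_not_mem ha]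
      omega

private lemma parity7 {E : Set (Fin n → ZMod 2)}
    (hE : ∀ W : Submodule (ZMod 2) (Fin n → ZMod 2), 3 ≤ finrank (ZMod 2) W →
      Even (E ∩ ((W : Set (Fin n → ZMod 2)) \ {0})).ncard)
    {x y w : Fin n → ZMod 2} (hx : x ≠ 0) (hy : y ≠ 0) (hxy : x ≠ y)
    (hw : w ∉ span (ZMod 2) {x, y}) :
    Even (indE E x + indE E y + indE E (x + y) + indE E w +
      indE E (x + w) + indE E (y + w) + indE E (x + y + w)) := by
  classical
  have hxs : x ∈ span (ZMod 2) ({x, y} : Set (Fin n → ZMod 2)) := subset_span (by simp)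
  have hys : y ∈ span (ZMod 2) ({x, y} : Set (Fin n → ZMod 2)) := subset_span (by simp)
  have hg : ∀ a b c : ZMod 2, a • x + b • y + c • w = 0 → a = 0 ∧ b = 0 ∧ c = 0 := by
    intro a b c h
    rcases zmod2cases c with rfl | rfl
    · rcases zmod2cases a with rfl | rfl <;> rcases zmod2cases b with rfl | rfl
      · exact ⟨rfl, rfl, rfl⟩
      · simp only [zero_smul, one_smul, zero_add, add_zero] at h; exact absurd h hy
      · simp only [zero_smul, one_smul, zero_add, add_zero] at h; exact absurd h hx
      · simp only [zero_smul, one_smul, zero_add, add_zero] at h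
        have : x = y := by rw [← cancel2 x y, h, add_zero]
        exact absurd this hxy
    · exfalso
      apply hw
      rcases zmod2cases a with rfl | rfl <;> rcases zmod2cases b with rfl | rfl <;>
        simp only [zero_smul, one_smul, zero_add, add_zero] at h
      · rw [show w = 0 from h]; exact zero_mem _
      · rw [show w = y by rw [← cancel2 y w, h, add_zero]]; exact hys
      · rw [show w = x by rw [← cancel2 x w, h, add_zero]]; exact hxs
      · rw [show w = x + y by rw [← cancel2 (x + y) w, h, add_zero]]
        exact add_mem hxs hys
  have z2 : ∀ u v : ZMod 2, u + v = 0 → u = v := by decide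
  have ginj : ∀ a b c a' b' c' : ZMod 2, a • x + b • y + c • w = a' • x + b' • y + c' • w →
      a = a' ∧ b = b' ∧ c = c' := by
    intro a b c a' b' c' h
    have h2 : (a + a') • x + (b + b') • y + (c + c') • w = 0 := by
      have he : (a + a') • x + (b + b') • y + (c + c') • w
          = (a • x + b • y + c • w) + (a' • x + b' • y + c' • w) := by
        simp only [add_smul]; abel
      rw [he, h, addself]
    obtain ⟨ha, hb, hc⟩ := hg _ _ _ h2
    exact ⟨z2 _ _ ha, z2 _ _ hb, z2 _ _ hc⟩
  have pne : ∀ a b c a' b' c' : ZMod 2, ¬(a = a' ∧ b = b' ∧ c = c') →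
      a • x + b • y + c • w ≠ a' • x + b' • y + c' • w :=
    fun a b c a' b' c' hne h => hne (ginj _ _ _ _ _ _ h)
  -- nonzeroness facts
  have n3 : x + y ≠ 0 := by simpa using pne 1 1 0 0 0 0 (by decide)
  have n4 : w ≠ 0 := by simpa using pne 0 0 1 0 0 0 (by decide)
  have n5 : x + w ≠ 0 := by simpa using pne 1 0 1 0 0 0 (by decide)
  have n6 : y + w ≠ 0 := by simpa using pne 0 1 1 0 0 0 (by decide)
  have n7 : x + y + w ≠ 0 := by simpa using pne 1 1 1 0 0 0 (by decide)
  -- the list of nonzero elements of W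
  set L : List (Fin n → ZMod 2) := [x, y, x + y, w, x + w, y + w, x + y + w] with hL
  have hnd : L.Nodup := by
    refine List.nodup_cons.mpr ⟨?_, List.nodup_cons.mpr ⟨?_, List.nodup_cons.mpr ⟨?_,
      List.nodup_cons.mpr ⟨?_, List.nodup_cons.mpr ⟨?_, List.nodup_cons.mpr ⟨?_,
      List.nodup_singleton _⟩⟩⟩⟩⟩⟩ <;> simp only [List.mem_cons, List.mem_singleton, not_or]
    · exact ⟨hxy, by simpa using pne 1 0 0 1 1 0 (by decide),
        by simpa using pne 1 0 0 0 0 1 (by decide),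
        by simpa using pne 1 0 0 1 0 1 (by decide),
        by simpa using pne 1 0 0 0 1 1 (by decide),
        by simpa using pne 1 0 0 1 1 1 (by decide)⟩
    · exact ⟨by simpa using pne 0 1 0 1 1 0 (by decide),
        by simpa using pne 0 1 0 0 0 1 (by decide),
        by simpa using pne 0 1 0 1 0 1 (by decide),
        by simpa using pne 0 1 0 0 1 1 (by decide),
        by simpa using pne 0 1 0 1 1 1 (by decide)⟩
    · exact ⟨by simpa using pne 1 1 0 0 0 1 (by decide),
        by simpa using pne 1 1 0 1 0 1 (by decide),
        by simpa using pne 1 1 0 0 1 1 (by decide),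
        by simpa using pne 1 1 0 1 1 1 (by decide)⟩
    · exact ⟨by simpa using pne 0 0 1 1 0 1 (by decide),
        by simpa using pne 0 0 1 0 1 1 (by decide),
        by simpa using pne 0 0 1 1 1 1 (by decide)⟩
    · exact ⟨by simpa using pne 1 0 1 0 1 1 (by decide),
        by simpa using pne 1 0 1 1 1 1 (by decide)⟩
    · exact by simpa using pne 0 1 1 1 1 1 (by decide)
  set W : Submodule (ZMod 2) (Fin n → ZMod 2) := span (ZMod 2) {x, y, w} with hW
  have hxW : x ∈ W := subset_span (by simp)
  have hyW : y ∈ W := subset_span (by simp)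
  have hwW : w ∈ W := subset_span (by simp)
  have hfr : 3 ≤ finrank (ZMod 2) W := by
    have l1 : span (ZMod 2) ({x} : Set (Fin n → ZMod 2)) < span (ZMod 2) {x, y} := by
      rw [SetLike.lt_iff_le_and_exists]
      refine ⟨span_mono (by simp), y, hys, ?_⟩
      rw [mem_span_singleton]
      rintro ⟨c, hc⟩
      rcases zmod2cases c with rfl | rfl
      · rw [zero_smul] at hc; exact hy hc.symm
      · rw [one_smul] at hc; exact hxy hc
    have l2 : span (ZMod 2) ({x, y} : Set (Fin n → ZMod 2)) < W := by
      rw [SetLike.lt_iff_le_and_exists]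
      refine ⟨span_mono (by intro z hz; simp only [Set.mem_insert_iff,
        Set.mem_singleton_iff] at hz ⊢; tauto), w, hwW, hw⟩
    have f1 : finrank (ZMod 2) (span (ZMod 2) ({x} : Set (Fin n → ZMod 2))) = 1 :=
      finrank_span_singleton hx
    have f2 := Submodule.finrank_lt_finrank_of_lt l1
    have f3 := Submodule.finrank_lt_finrank_of_lt l2
    omega
  have hset : (W : Set (Fin n → ZMod 2)) \ {0} = {z | z ∈ L} := by
    ext v
    simp only [Set.mem_diff, Set.mem_singleton_iff, SetLike.mem_coe, Set.mem_setOf_eq, hL,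
      List.mem_cons, List.mem_singleton, List.not_mem_nil, or_false]
    constructor
    · rintro ⟨hv, hv0⟩
      rw [hW, show ({x, y, w} : Set (Fin n → ZMod 2)) = insert x {y, w} from rfl,
        mem_span_insert] at hv
      obtain ⟨a, z, hz, rfl⟩ := hv
      rw [show ({y, w} : Set (Fin n → ZMod 2)) = insert y {w} from rfl,
        mem_span_insert] at hz
      obtain ⟨b, u, hu, rfl⟩ := hz
      rw [mem_span_singleton] at hu
      obtain ⟨c, rfl⟩ := hu
      rcases zmod2cases a with rfl | rfl <;> rcases zmod2cases b with rfl | rfl <;>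
        rcases zmod2cases c with rfl | rfl <;>
        simp only [zero_smul, one_smul, zero_add, add_zero] at hv0 ⊢
      · simp at hv0
      all_goals simp [add_assoc]
    · rintro (rfl | rfl | rfl | rfl | rfl | rfl | rfl)
      · exact ⟨hxW, hx⟩
      · exact ⟨hyW, hy⟩
      · exact ⟨add_mem hxW hyW, n3⟩
      · exact ⟨hwW, n4⟩
      · exact ⟨add_mem hxW hwW, n5⟩
      · exact ⟨add_mem hyW hwW, n6⟩
      · exact ⟨add_mem (add_mem hxW hyW) hwW, n7⟩
  have hpar := hE W hfr
  rw [hset, ncard_inter_list E L hnd, hL] at hpar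
  simp only [List.map_cons, List.map_nil, List.sum_cons, List.sum_nil, add_zero] at hpar
  rw [Nat.even_iff] at hpar ⊢
  omega

private lemma pick3 (K H : Submodule (ZMod 2) (Fin n → ZMod 2))
    (h : finrank (ZMod 2) K + 3 ≤ finrank (ZMod 2) H) :
    ∃ x1 x2 x3 : Fin n → ZMod 2, x1 ∈ H ∧ x2 ∈ H ∧ x3 ∈ H ∧ x1 ≠ 0 ∧ x2 ≠ 0 ∧ x1 ≠ x2 ∧
      x3 ∉ span (ZMod 2) ({x1, x2} : Set (Fin n → ZMod 2)) ∧ x1 ∉ K ∧ x2 ∉ K ∧ x1 + x2 ∉ K ∧ x3 ∉ K ∧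
      x1 + x3 ∉ K ∧ x2 + x3 ∉ K ∧ x1 + x2 + x3 ∉ K := by
  have hstep : ∀ S : Submodule (ZMod 2) (Fin n → ZMod 2),
      finrank (ZMod 2) S < finrank (ZMod 2) H → ∃ v ∈ H, v ∉ S := by
    intro S hS
    rw [← SetLike.not_le_iff_exists]
    intro hle
    exact absurd (Submodule.finrank_mono hle) (by omega)
  obtain ⟨x1, hx1H, hx1K⟩ := hstep K (by omega)
  have hx1ne : x1 ≠ 0 := fun hh => hx1K (hh ▸ K.zero_mem)
  have hK1 : finrank (ZMod 2) ↥(K ⊔ span (ZMod 2) ({x1} : Set (Fin n → ZMod 2))) < finrank (ZMod 2) H := by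
    have h1 := Submodule.finrank_sup_add_finrank_inf_eq K (span (ZMod 2) ({x1} : Set (Fin n → ZMod 2)))
    rw [finrank_span_singleton hx1ne] at h1
    omega
  obtain ⟨x2, hx2H, hx2K1⟩ := hstep _ hK1
  have hx2K : x2 ∉ K := fun hh => hx2K1 (Submodule.mem_sup_left hh)
  have hx1mem : x1 ∈ K ⊔ span (ZMod 2) ({x1} : Set (Fin n → ZMod 2)) :=
    Submodule.mem_sup_right (Submodule.mem_span_singleton_self x1)
  have hx2ne : x2 ≠ 0 := fun hh => hx2K1 (hh ▸ Submodule.zero_mem _)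
  have hx12 : x1 ≠ x2 := fun hh => hx2K1 (hh ▸ hx1mem)
  have hx12K : x1 + x2 ∉ K := by
    intro hh
    apply hx2K1
    have h2 := Submodule.add_mem _ hx1mem (Submodule.mem_sup_left hh)
    rwa [cancel2] at h2
  have hsp2 : finrank (ZMod 2) (span (ZMod 2) ({x1, x2} : Set (Fin n → ZMod 2))) ≤ 2 := by
    rw [show ({x1, x2} : Set (Fin n → ZMod 2)) = insert x1 {x2} from rfl, Submodule.span_insert]
    have e0 : finrank (ZMod 2) (span (ZMod 2) ({x1} : Set (Fin n → ZMod 2))) = 1 :=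
      finrank_span_singleton hx1ne
    have e1 : finrank (ZMod 2) (span (ZMod 2) ({x2} : Set (Fin n → ZMod 2))) = 1 :=
      finrank_span_singleton hx2ne
    have h1 := Submodule.finrank_sup_add_finrank_inf_eq
      (span (ZMod 2) ({x1} : Set (Fin n → ZMod 2))) (span (ZMod 2) ({x2} : Set (Fin n → ZMod 2)))
    omega
  have hK2 : finrank (ZMod 2) ↥(K ⊔ span (ZMod 2) ({x1, x2} : Set (Fin n → ZMod 2))) < finrank (ZMod 2) H := by
    have h1 := Submodule.finrank_sup_add_finrank_inf_eq K
      (span (ZMod 2) ({x1, x2} : Set (Fin n → ZMod 2)))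
    omega
  obtain ⟨x3, hx3H, hx3K2⟩ := hstep _ hK2
  have hsub : span (ZMod 2) ({x1, x2} : Set (Fin n → ZMod 2)) ≤ K ⊔ span (ZMod 2) ({x1, x2} : Set (Fin n → ZMod 2)) :=
    le_sup_right
  have hx1s : x1 ∈ span (ZMod 2) ({x1, x2} : Set (Fin n → ZMod 2)) := subset_span (by simp)
  have hx2s : x2 ∈ span (ZMod 2) ({x1, x2} : Set (Fin n → ZMod 2)) := subset_span (by simp)
  have hx3sp : x3 ∉ span (ZMod 2) ({x1, x2} : Set (Fin n → ZMod 2)) := fun hh => hx3K2 (hsub hh)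
  have hx3K : x3 ∉ K := fun hh => hx3K2 (Submodule.mem_sup_left hh)
  have h13 : x1 + x3 ∉ K := by
    intro hh
    apply hx3K2
    have h2 := Submodule.add_mem _ (hsub hx1s) (Submodule.mem_sup_left hh)
    rwa [cancel2] at h2
  have h23 : x2 + x3 ∉ K := by
    intro hh
    apply hx3K2
    have h2 := Submodule.add_mem _ (hsub hx2s) (Submodule.mem_sup_left hh)
    rwa [cancel2] at h2
  have h123 : x1 + x2 + x3 ∉ K := by
    intro hh
    apply hx3K2
    have h2 := Submodule.add_mem _ (hsub (Submodule.add_mem _ hx1s hx2s))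
      (Submodule.mem_sup_left hh)
    rwa [cancel2] at h2
  exact ⟨x1, x2, x3, hx1H, hx2H, hx3H, hx1ne, hx2ne, hx12, hx3sp, hx1K, hx2K, hx12K,
    hx3K, h13, h23, h123⟩


private lemma pos_case {E : Set (Fin n → ZMod 2)} (h0E : (0 : Fin n → ZMod 2) ∉ E)
    (hE : ∀ W : Submodule (ZMod 2) (Fin n → ZMod 2), 3 ≤ finrank (ZMod 2) W →
      Even (E ∩ ((W : Set (Fin n → ZMod 2)) \ {0})).ncard)
    (H : Submodule (ZMod 2) (Fin n → ZMod 2))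
    {w : Fin n → ZMod 2} (hwH : w ∉ H) (hwE : w ∉ E)
    {x₀ : Fin n → ZMod 2} (hx₀H : x₀ ∈ H) (hx₀ : ¬(x₀ ∈ E ↔ x₀ + w ∈ E)) :
    BinMatroid.IsSemidoublingOfRes E H := by
  classical
  have hw0 : w ≠ 0 := fun h => hwH (h ▸ H.zero_mem)
  have spanle : ∀ a b : Fin n → ZMod 2, a ∈ H → b ∈ H →
      w ∉ span (ZMod 2) ({a, b} : Set (Fin n → ZMod 2)) := by
    intro a b ha hb hmem
    refine hwH (Submodule.span_le.mpr ?_ hmem)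
    intro z hz
    simp only [Set.mem_insert_iff, Set.mem_singleton_iff] at hz
    rcases hz with rfl | rfl <;> assumption
  have hadd : ∀ a b : Fin n → ZMod 2, a ∈ H → b ∈ H → (a ∈ E ↔ a + w ∈ E) →
      (b ∈ E ↔ b + w ∈ E) → (a + b ∈ E ↔ a + b + w ∈ E) := by
    intro a b haH hbH ha hb
    by_cases ha0 : a = 0
    · subst ha0; rwa [zero_add]
    by_cases hb0 : b = 0
    · subst hb0; rwa [add_zero]
    by_cases hab : a = b
    · subst hab; rw [addself, zero_add]; exact iff_of_false h0E hwE
    have hpar := parity7 hE ha0 hb0 hab (spanle a b haH hbH)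
    rw [← even_indE_add]
    have e1 : Even (indE E a + indE E (a + w)) := even_indE_add.mpr ha
    have e2 : Even (indE E b + indE E (b + w)) := even_indE_add.mpr hb
    have e3 : indE E w = 0 := indE_of_not_mem hwE
    rw [Nat.even_iff] at hpar e1 e2 ⊢
    omega
  have hodd : ∀ a b : Fin n → ZMod 2, a ∈ H → b ∈ H → ¬(a ∈ E ↔ a + w ∈ E) →
      ¬(b ∈ E ↔ b + w ∈ E) → (a + b ∈ E ↔ a + b + w ∈ E) := by
    intro a b haH hbH ha hb
    have ha0 : a ≠ 0 := by rintro rfl; exact ha (by rw [zero_add]; exact iff_of_false h0E hwE)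
    have hb0 : b ≠ 0 := by rintro rfl; exact hb (by rw [zero_add]; exact iff_of_false h0E hwE)
    by_cases hab : a = b
    · subst hab; rw [addself, zero_add]; exact iff_of_false h0E hwE
    have hpar := parity7 hE ha0 hb0 hab (spanle a b haH hbH)
    rw [← even_indE_add]
    have e1 : ¬ Even (indE E a + indE E (a + w)) := fun h => ha (even_indE_add.mp h)
    have e2 : ¬ Even (indE E b + indE E (b + w)) := fun h => hb (even_indE_add.mp h)
    have e3 : indE E w = 0 := indE_of_not_mem hwE
    rw [Nat.even_iff] at hpar e1 e2 ⊢
    omega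
  have h0mem : (0 : Fin n → ZMod 2) ∈ H ∧ ((0 : Fin n → ZMod 2) ∈ E ↔ 0 + w ∈ E) :=
    ⟨H.zero_mem, by rw [zero_add]; exact iff_of_false h0E hwE⟩
  let H₀ : Submodule (ZMod 2) (Fin n → ZMod 2) :=
    { carrier := {z | z ∈ H ∧ (z ∈ E ↔ z + w ∈ E)}
      add_mem' := fun {a b} ha hb => ⟨H.add_mem ha.1 hb.1, hadd a b ha.1 hb.1 ha.2 hb.2⟩
      zero_mem' := h0mem
      smul_mem' := by
        intro c z hz
        rcases zmod2cases c with rfl | rfl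
        · rw [zero_smul]; exact h0mem
        · rwa [one_smul] }
  have memH₀ : ∀ z : Fin n → ZMod 2, z ∈ H₀ ↔ z ∈ H ∧ (z ∈ E ↔ z + w ∈ E) := fun z => Iff.rfl
  have hx₀H₀ : x₀ ∉ H₀ := fun h => hx₀ ((memH₀ x₀).mp h).2
  have hx₀0 : x₀ ≠ 0 := by
    rintro rfl; exact hx₀ (by rw [zero_add]; exact iff_of_false h0E hwE)
  have hkey : ∀ z : Fin n → ZMod 2, z ∈ H → z ∉ H₀ → z + x₀ ∈ H₀ := by
    intro z hzH hz
    have hz2 : ¬(z ∈ E ↔ z + w ∈ E) := fun h => hz ((memH₀ z).mpr ⟨hzH, h⟩)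
    exact (memH₀ _).mpr ⟨H.add_mem hzH hx₀H, hodd z x₀ hzH hx₀H hz2 hx₀⟩
  have hsup : H₀ ⊔ span (ZMod 2) ({x₀} : Set (Fin n → ZMod 2)) = H := by
    apply le_antisymm
    · refine sup_le (fun z hz => ((memH₀ z).mp hz).1) ?_
      rw [Submodule.span_le, Set.singleton_subset_iff]
      exact hx₀H
    · intro z hz
      by_cases hzH₀ : z ∈ H₀
      · exact Submodule.mem_sup_left hzH₀
      · have h1 := hkey z hz hzH₀
        have h2 : z = (z + x₀) + x₀ := (cancel1 z x₀).symm
        rw [h2]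
        exact Submodule.add_mem _ (Submodule.mem_sup_left h1)
          (Submodule.mem_sup_right (Submodule.mem_span_singleton_self x₀))
  have hinf : H₀ ⊓ span (ZMod 2) ({x₀} : Set (Fin n → ZMod 2)) = ⊥ := by
    rw [eq_bot_iff]
    intro z hz
    rw [Submodule.mem_inf] at hz
    obtain ⟨hz1, hz2⟩ := hz
    rw [Submodule.mem_span_singleton] at hz2
    obtain ⟨c, rfl⟩ := hz2
    rcases zmod2cases c with rfl | rfl
    · rw [zero_smul]; exact Submodule.zero_mem ⊥
    · rw [one_smul] at hz1; exact absurd hz1 hx₀H₀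
  have hfr : finrank (ZMod 2) H₀ + 1 = finrank (ZMod 2) H := by
    have h1 := Submodule.finrank_sup_add_finrank_inf_eq H₀
      (span (ZMod 2) ({x₀} : Set (Fin n → ZMod 2)))
    rw [hsup, hinf, finrank_span_singleton hx₀0, finrank_bot] at h1
    omega
  refine ⟨H₀, fun z hz => ((memH₀ z).mp hz).1, hfr, w, hw0, hwH, hwE, ?_, ?_⟩
  · intro z hz
    obtain ⟨hz1, hz0⟩ := hz
    have hiff := ((memH₀ z).mp hz1).2
    have hne : z ≠ z + w := by
      intro h
      apply hw0
      rw [← cancel2 z w, ← h, addself]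
    by_cases hzE : z ∈ E
    · right
      have heq : ({z, z + w} : Set (Fin n → ZMod 2)) ∩ E = {z, z + w} := by
        rw [Set.inter_eq_left]
        rintro u hu
        simp only [Set.mem_insert_iff, Set.mem_singleton_iff] at hu
        rcases hu with rfl | rfl
        · exact hzE
        · exact hiff.mp hzE
      rw [heq, Set.ncard_pair hne]
    · left
      have heq : ({z, z + w} : Set (Fin n → ZMod 2)) ∩ E = ∅ := by
        ext u
        simp only [Set.mem_inter_iff, Set.mem_insert_iff, Set.mem_singleton_iff,
          Set.mem_empty_iff_false, iff_false, not_and]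
        rintro (rfl | rfl)
        · exact hzE
        · exact fun h => hzE (hiff.mpr h)
      rw [heq, Set.ncard_empty]
  · intro z hz
    obtain ⟨hzH, hzH₀⟩ := hz
    have hzH' : z ∈ H := hzH
    have hniff : ¬(z ∈ E ↔ z + w ∈ E) := fun h => hzH₀ ((memH₀ z).mpr ⟨hzH', h⟩)
    by_cases hzE : z ∈ E
    · have hzwE : z + w ∉ E := fun h => hniff (iff_of_true hzE h)
      have heq : ({z, z + w} : Set (Fin n → ZMod 2)) ∩ E = {z} := by
        ext u
        simp only [Set.mem_inter_iff, Set.mem_insert_iff, Set.mem_singleton_iff]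
        constructor
        · rintro ⟨rfl | rfl, hu⟩
          · rfl
          · exact absurd hu hzwE
        · rintro rfl; exact ⟨Or.inl rfl, hzE⟩
      rw [heq, Set.ncard_singleton]
    · have hzwE : z + w ∈ E := by
        by_contra h
        exact hniff (iff_of_false hzE h)
      have heq : ({z, z + w} : Set (Fin n → ZMod 2)) ∩ E = {z + w} := by
        ext u
        simp only [Set.mem_inter_iff, Set.mem_insert_iff, Set.mem_singleton_iff]
        constructor
        · rintro ⟨rfl | rfl, hu⟩
          · exact absurd hu hzE
          · rfl
        · rintro rfl; exact ⟨Or.inr rfl, hzwE⟩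
      rw [heq, Set.ncard_singleton]

private lemma neg_case1 {E : Set (Fin n → ZMod 2)} (h0E : (0 : Fin n → ZMod 2) ∉ E)
    (hE : ∀ W : Submodule (ZMod 2) (Fin n → ZMod 2), 3 ≤ finrank (ZMod 2) W →
      Even (E ∩ ((W : Set (Fin n → ZMod 2)) \ {0})).ncard)
    (hL0 : ∀ K : Submodule (ZMod 2) (Fin n → ZMod 2),
      Disjoint ((K : Set (Fin n → ZMod 2)) \ {0}) E → finrank (ZMod 2) K + 3 ≤ n)
    (H : Submodule (ZMod 2) (Fin n → ZMod 2)) (hH : finrank (ZMod 2) H + 1 = n)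
    (hall : ∀ v : Fin n → ZMod 2, v ∉ H → v ∈ E) : False := by
  classical
  have hfinV : finrank (ZMod 2) (Fin n → ZMod 2) = n := by
    simp [Module.finrank_pi]
  obtain ⟨v, -, hvH⟩ : ∃ v ∈ (⊤ : Submodule (ZMod 2) (Fin n → ZMod 2)), v ∉ H := by
    rw [← SetLike.not_le_iff_exists]
    intro hle
    have h1 : finrank (ZMod 2) (⊤ : Submodule (ZMod 2) (Fin n → ZMod 2)) ≤
        finrank (ZMod 2) H := Submodule.finrank_mono hle
    rw [finrank_top, hfinV] at h1
    omega
  have hcl : ∀ a b : Fin n → ZMod 2, a ∈ H → a ∉ E → b ∈ H → b ∉ E → a + b ∉ E := by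
    intro a b haH haE hbH hbE
    by_cases hab : a = b
    · subst hab; rw [addself]; exact h0E
    by_cases ha0 : a = 0
    · subst ha0; rwa [zero_add]
    by_cases hb0 : b = 0
    · subst hb0; rwa [add_zero]
    have hsp : v ∉ span (ZMod 2) ({a, b} : Set (Fin n → ZMod 2)) := by
      intro hmem
      refine hvH (Submodule.span_le.mpr ?_ hmem)
      intro z hz
      simp only [Set.mem_insert_iff, Set.mem_singleton_iff] at hz
      rcases hz with rfl | rfl <;> assumption
    have hpar := parity7 hE ha0 hb0 hab hsp
    have hav : a + v ∉ H := by
      intro h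
      apply hvH
      have h2 := H.add_mem haH h
      rwa [cancel2] at h2
    have hbv : b + v ∉ H := by
      intro h
      apply hvH
      have h2 := H.add_mem hbH h
      rwa [cancel2] at h2
    have habv : a + b + v ∉ H := by
      intro h
      apply hvH
      have h2 := H.add_mem (H.add_mem haH hbH) h
      rwa [cancel2] at h2
    intro habE
    rw [indE_of_not_mem haE, indE_of_not_mem hbE, indE_of_mem habE,
      indE_of_mem (hall v hvH), indE_of_mem (hall _ hav), indE_of_mem (hall _ hbv),
      indE_of_mem (hall _ habv), Nat.even_iff] at hpar
    omega
  let K : Submodule (ZMod 2) (Fin n → ZMod 2) :=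
    { carrier := {z | z ∈ H ∧ z ∉ E}
      add_mem' := fun {a b} ha hb => ⟨H.add_mem ha.1 hb.1, hcl a b ha.1 ha.2 hb.1 hb.2⟩
      zero_mem' := ⟨H.zero_mem, h0E⟩
      smul_mem' := by
        intro c z hz
        rcases zmod2cases c with rfl | rfl
        · rw [zero_smul]; exact ⟨H.zero_mem, h0E⟩
        · rwa [one_smul] }
  have memK : ∀ z : Fin n → ZMod 2, z ∈ K ↔ z ∈ H ∧ z ∉ E := fun z => Iff.rfl
  have hdisj : Disjoint ((K : Set (Fin n → ZMod 2)) \ {0}) E := by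
    rw [Set.disjoint_left]
    rintro z ⟨hz1, -⟩ hzE
    exact ((memK z).mp hz1).2 hzE
  have hK3 := hL0 K hdisj
  obtain ⟨x1, x2, x3, -, -, -, h1, h2, h12, hsp, k1, k2, k12, k3, k13, k23, k123⟩ :=
    pick3 K ⊤ (by rw [finrank_top, hfinV]; omega)
  have hmem : ∀ c : Fin n → ZMod 2, c ∉ K → c ∈ E := by
    intro c hc
    by_contra hcE
    by_cases hcH : c ∈ H
    · exact hc ((memK c).mpr ⟨hcH, hcE⟩)
    · exact hcE (hall c hcH)
  have hpar := parity7 hE h1 h2 h12 hsp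
  rw [indE_of_mem (hmem _ k1), indE_of_mem (hmem _ k2), indE_of_mem (hmem _ k12),
    indE_of_mem (hmem _ k3), indE_of_mem (hmem _ k13), indE_of_mem (hmem _ k23),
    indE_of_mem (hmem _ k123), Nat.even_iff] at hpar
  omega

private lemma neg_case2 {E : Set (Fin n → ZMod 2)} (h0E : (0 : Fin n → ZMod 2) ∉ E)
    (hE : ∀ W : Submodule (ZMod 2) (Fin n → ZMod 2), 3 ≤ finrank (ZMod 2) W →
      Even (E ∩ ((W : Set (Fin n → ZMod 2)) \ {0})).ncard)
    (hL0 : ∀ K : Submodule (ZMod 2) (Fin n → ZMod 2),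
      Disjoint ((K : Set (Fin n → ZMod 2)) \ {0}) E → finrank (ZMod 2) K + 3 ≤ n)
    (H : Submodule (ZMod 2) (Fin n → ZMod 2)) (hH : finrank (ZMod 2) H + 1 = n)
    {w : Fin n → ZMod 2} (hwH : w ∉ H) (hwE : w ∉ E)
    (hf : ∀ w' : Fin n → ZMod 2, w' ∉ H → w' ∉ E → ∀ z ∈ H, (z ∈ E ↔ z + w' ∈ E)) :
    False := by
  classical
  have hcl : ∀ a b : Fin n → ZMod 2, a ∈ H → a ∉ E → b ∈ H → b ∉ E → a + b ∉ E := by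
    intro a b haH haE hbH hbE
    have hwbH : w + b ∉ H := by
      intro h
      apply hwH
      have h2 := H.add_mem h hbH
      rwa [cancel1] at h2
    have hwbE : w + b ∉ E := by
      intro h
      exact hbE ((hf w hwH hwE b hbH).mpr (by rwa [add_comm]))
    have h2 := hf (w + b) hwbH hwbE (a + b) (H.add_mem haH hbH)
    have h3 : (a + b) + (w + b) = a + w := by
      rw [add_assoc a b (w + b), add_comm w b, ← add_assoc b b w, addself, zero_add]
    have h4 := hf w hwH hwE a haH
    intro habE
    exact haE (h4.mpr (by rw [← h3]; exact h2.mp habE))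
  let K : Submodule (ZMod 2) (Fin n → ZMod 2) :=
    { carrier := {z | z ∈ H ∧ z ∉ E}
      add_mem' := fun {a b} ha hb => ⟨H.add_mem ha.1 hb.1, hcl a b ha.1 ha.2 hb.1 hb.2⟩
      zero_mem' := ⟨H.zero_mem, h0E⟩
      smul_mem' := by
        intro c z hz
        rcases zmod2cases c with rfl | rfl
        · rw [zero_smul]; exact ⟨H.zero_mem, h0E⟩
        · rwa [one_smul] }
  have memK : ∀ z : Fin n → ZMod 2, z ∈ K ↔ z ∈ H ∧ z ∉ E := fun z => Iff.rfl
  have hwK : w ∉ K := fun h => hwH ((memK w).mp h).1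
  have hw0 : w ≠ 0 := fun h => hwH (h ▸ H.zero_mem)
  have hinf : K ⊓ span (ZMod 2) ({w} : Set (Fin n → ZMod 2)) = ⊥ := by
    rw [eq_bot_iff]
    intro z hz
    rw [Submodule.mem_inf] at hz
    obtain ⟨hz1, hz2⟩ := hz
    rw [Submodule.mem_span_singleton] at hz2
    obtain ⟨c, rfl⟩ := hz2
    rcases zmod2cases c with rfl | rfl
    · rw [zero_smul]; exact Submodule.zero_mem ⊥
    · rw [one_smul] at hz1; exact absurd hz1 hwK
  have hdisj : Disjoint (((K ⊔ span (ZMod 2) ({w} : Set (Fin n → ZMod 2)) :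
      Submodule (ZMod 2) (Fin n → ZMod 2)) : Set (Fin n → ZMod 2)) \ {0}) E := by
    rw [Set.disjoint_left]
    rintro z ⟨hz1, -⟩ hzE
    rw [SetLike.mem_coe, Submodule.mem_sup] at hz1
    obtain ⟨k, hk, s, hs, rfl⟩ := hz1
    rw [Submodule.mem_span_singleton] at hs
    obtain ⟨c, rfl⟩ := hs
    have hkH := ((memK k).mp hk).1
    have hkE := ((memK k).mp hk).2
    rcases zmod2cases c with rfl | rfl
    · rw [zero_smul, add_zero] at hzE; exact hkE hzE
    · rw [one_smul] at hzE
      exact hkE ((hf w hwH hwE k hkH).mpr hzE)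
  have hK1 := hL0 _ hdisj
  have hfr := Submodule.finrank_sup_add_finrank_inf_eq K
    (span (ZMod 2) ({w} : Set (Fin n → ZMod 2)))
  rw [hinf, finrank_span_singleton hw0, finrank_bot] at hfr
  obtain ⟨x1, x2, x3, m1, m2, m3, h1, h2, h12, hsp, k1, k2, k12, k3, k13, k23, k123⟩ :=
    pick3 K H (by omega)
  have hmem : ∀ c : Fin n → ZMod 2, c ∈ H → c ∉ K → c ∈ E := by
    intro c hcH hc
    by_contra hcE
    exact hc ((memK c).mpr ⟨hcH, hcE⟩)
  have hpar := parity7 hE h1 h2 h12 hsp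
  rw [indE_of_mem (hmem _ m1 k1), indE_of_mem (hmem _ m2 k2),
    indE_of_mem (hmem _ (H.add_mem m1 m2) k12), indE_of_mem (hmem _ m3 k3),
    indE_of_mem (hmem _ (H.add_mem m1 m3) k13), indE_of_mem (hmem _ (H.add_mem m2 m3) k23),
    indE_of_mem (hmem _ (H.add_mem (H.add_mem m1 m2) m3) k123), Nat.even_iff] at hpar
  omega

end SDAux

/-- If `M = (E, G) ∈ ℰ₃` and `χ(M) ≥ 3`, then for every hyperplane `H`
of `G` the matroid `M` is a semidoubling of `M|H`. -/
theorem stmt10 (M : BinMatroid) (hM : M.MemE 3) (hchi : 3 ≤ M.critNum)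
    (H : Submodule (ZMod 2) (Fin M.dim → ZMod 2))
    (hH : Module.finrank (ZMod 2) H + 1 = M.dim) :
    BinMatroid.IsSemidoublingOfRes M.E H := by
  classical
  have hfinV : Module.finrank (ZMod 2) (Fin M.dim → ZMod 2) = M.dim := by
    simp [Module.finrank_pi]
  have hL0 : ∀ K : Submodule (ZMod 2) (Fin M.dim → ZMod 2),
      Disjoint ((K : Set (Fin M.dim → ZMod 2)) \ {0}) M.E →
      Module.finrank (ZMod 2) K + 3 ≤ M.dim := by
    intro K hdisj
    have hle : Module.finrank (ZMod 2) K ≤ M.dim := by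
      have := K.finrank_le
      rwa [hfinV] at this
    have hmem : (M.dim - Module.finrank (ZMod 2) K) ∈ {k : ℕ |
        ∃ W : Submodule (ZMod 2) (Fin M.dim → ZMod 2),
          Module.finrank (ZMod 2) W = M.dim - k ∧
          Disjoint ((W : Set (Fin M.dim → ZMod 2)) \ {0}) M.E} :=
      ⟨K, by omega, hdisj⟩
    have hc : M.critNum ≤ M.dim - Module.finrank (ZMod 2) K := Nat.sInf_le hmem
    omega
  by_cases hex : ∃ w, w ∉ H ∧ w ∉ M.E ∧ ∃ x₀, x₀ ∈ H ∧ ¬(x₀ ∈ M.E ↔ x₀ + w ∈ M.E)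
  · obtain ⟨w, hwH, hwE, x₀, hx₀H, hx₀⟩ := hex
    exact pos_case M.zero_not_mem hM H hwH hwE hx₀H hx₀
  · exfalso
    push_neg at hex
    by_cases hw : ∃ w, w ∉ H ∧ w ∉ M.E
    · obtain ⟨w, hwH, hwE⟩ := hw
      exact neg_case2 M.zero_not_mem hM hL0 H hH hwH hwE
        (fun w' h1 h2 z hz => hex w' h1 h2 z hz)
    · push_neg at hw
      exact neg_case1 M.zero_not_mem hM hL0 H hH hw
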